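/- For every integer n ≥ 5, the direct product K₂ × K_n is super edge-connected; that is, every minimum edge-cut of K₂ × K_n consists of the edges incident with a single vertex (equivalently, removing any edge-cut of minimum cardinality isolates a vertex). -/

import Mathlib

open SimpleGraph

/-- The direct (tensor/Kronecker) product of two simple graphs:
`(u₁, v₁)` and `(u₂, v₂)` are adjacent iff `u₁u₂ ∈ E(G)` and `v₁v₂ ∈ E(H)`. -/
def tensorProd {α β : Type*} (G : SimpleGraph α) (H : SimpleGraph β) :
    SimpleGraph (α × β) where
  Adj x y := G.Adj x.1 y.1 ∧ H.Adj x.2 y.2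
  symm := ⟨fun _ _ h => ⟨h.1.symm, h.2.symm⟩⟩
  loopless := ⟨fun _ h => G.loopless.irrefl _ h.1⟩

/-- The direct product `G × Tₙ` of a simple graph `G` with the total graph `Tₙ`
(the complete graph `Kₙ` with a loop added at every vertex):  since `Tₙ` has all
possible edges and loops, `(u₁, v₁)` is adjacent to `(u₂, v₂)` iff `u₁u₂ ∈ E(G)`. -/
def totalProd {α : Type*} (G : SimpleGraph α) (n : ℕ) :
    SimpleGraph (α × Fin n) where
  Adj x y := G.Adj x.1 y.1
  symm := ⟨fun _ _ h => h.symm⟩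
  loopless := ⟨fun _ h => G.loopless.irrefl _ h⟩

/-- The direct product `K₂ × Kₙ`. -/
def K2timesKn (n : ℕ) : SimpleGraph (Fin 2 × Fin n) :=
  tensorProd (completeGraph (Fin 2)) (completeGraph (Fin n))

/-- The direct product `K₂ × Tₙ` (isomorphic to the complete bipartite graph `K_{n,n}`). -/
def K2timesTn (n : ℕ) : SimpleGraph (Fin 2 × Fin n) :=
  totalProd (completeGraph (Fin 2)) n

/-- `[A, V ∖ A]` : the set of edges of `G` with exactly one endpoint in `A`. -/
def cutEdges {α : Type*} (G : SimpleGraph α) (A : Set α) : Set (Sym2 α) :=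
  {e | e ∈ G.edgeSet ∧ ∃ u v, e = s(u, v) ∧ u ∈ A ∧ v ∉ A}

/-- `F` is an edge-cut of `G`: a set of edges whose deletion disconnects `G`. -/
def IsEdgeCut {α : Type*} (G : SimpleGraph α) (F : Set (Sym2 α)) : Prop :=
  F ⊆ G.edgeSet ∧ ¬ (G.deleteEdges F).Connected

/-- The edge-connectivity `λ(G)`: the minimum cardinality of an edge-cut. -/
noncomputable def edgeConn {α : Type*} (G : SimpleGraph α) : ℕ :=
  sInf {k | ∃ F : Finset (Sym2 α), IsEdgeCut G ↑F ∧ F.card = k}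

/-- `G` is super edge-connected (super-λ): every minimum edge-cut is exactly the
set of edges incident with some vertex. -/
def SuperEdgeConnected {α : Type*} (G : SimpleGraph α) : Prop :=
  ∀ F : Finset (Sym2 α), IsEdgeCut G ↑F → F.card = edgeConn G →
    ∃ v, (F : Set (Sym2 α)) = G.incidenceSet v

/-- `F` is a restricted edge-cut of `G`: its deletion disconnects `G` and every
connected component of `G − F` has at least two vertices. -/
def IsRestrictedEdgeCut {α : Type*} (G : SimpleGraph α) (F : Set (Sym2 α)) : Prop :=
  F ⊆ G.edgeSet ∧ ¬ (G.deleteEdges F).Connected ∧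
    ∀ c : (G.deleteEdges F).ConnectedComponent, c.supp.Nontrivial

/-- The restricted edge-connectivity `λ'(G) : ℕ∞`: the minimum cardinality of a
restricted edge-cut, and `+∞` (`⊤`) if no restricted edge-cut exists. -/
noncomputable def restrictedEdgeConn {α : Type*} (G : SimpleGraph α) : ℕ∞ :=
  sInf {k : ℕ∞ | ∃ F : Finset (Sym2 α), IsRestrictedEdgeCut G ↑F ∧ (F.card : ℕ∞) = k}

/-- `G` is super restricted edge-connected (super-λ'): every minimum restricted
edge-cut isolates an edge, i.e. some component of `G − F` is a single edge. -/
def SuperRestrictedEdgeConnected {α : Type*} (G : SimpleGraph α) : Prop :=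
  ∀ F : Finset (Sym2 α), IsRestrictedEdgeCut G ↑F →
    (F.card : ℕ∞) = restrictedEdgeConn G →
    ∃ u v, (G.deleteEdges ↑F).Adj u v ∧
      ((G.deleteEdges ↑F).connectedComponentMk u).supp = {u, v}

/-- The minimum edge-degree `ξ(G) = min { d(u) + d(v) − 2 : uv ∈ E(G) }`. -/
noncomputable def minEdgeDegree {α : Type*} (G : SimpleGraph α) : ℕ :=
  sInf {k | ∃ u v, G.Adj u v ∧ (G.neighborSet u).ncard + (G.neighborSet v).ncard - 2 = k}

lemma arith_int (n a b c d t1 t2 : ℤ) (h5 : 5 ≤ n)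
    (ha : 1 ≤ a) (hb : 1 ≤ b) (hc : 1 ≤ c) (hd : 1 ≤ d)
    (hac : a + c = n) (hbd : b + d = n)
    (ht1a : t1 ≤ a) (ht1d : t1 ≤ d) (ht2b : t2 ≤ b) (ht2c : t2 ≤ c) :
    n + t1 + t2 ≤ a * d + b * c := by
  nlinarith [mul_nonneg (sub_nonneg.2 ht1a) (sub_nonneg.2 ht1d),
    mul_nonneg (sub_nonneg.2 ht2b) (sub_nonneg.2 ht2c),
    mul_nonneg (sub_nonneg.2 ha : (0:ℤ) ≤ a - 1) (sub_nonneg.2 hd : (0:ℤ) ≤ d - 1),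
    mul_nonneg (sub_nonneg.2 hb : (0:ℤ) ≤ b - 1) (sub_nonneg.2 hc : (0:ℤ) ≤ c - 1),
    sq_nonneg (a - d), sq_nonneg (b - c), sq_nonneg (a + d - b - c)]

lemma zcase (n x t cr : ℕ) (h5 : 5 ≤ n) (hx : x ≤ n) (ht : t ≤ x)
    (hcr : cr + t = x * n) :
    (1 ≤ x → n ≤ cr + 1) ∧ (2 ≤ x → n ≤ cr) := by
  constructor
  · intro hx1
    have key : (x:ℤ) * n + 1 ≥ x + n := by nlinarith [mul_nonneg (by omega : (0:ℤ) ≤ (x:ℤ) - 1) (by omega : (0:ℤ) ≤ (n:ℤ) - 1)]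
    have hcr' : (cr:ℤ) + t = (x:ℤ) * n := by exact_mod_cast hcr
    have : (n:ℤ) ≤ (cr:ℤ) + 1 := by
      have ht' : (t:ℤ) ≤ x := by exact_mod_cast ht
      linarith
    exact_mod_cast this
  · intro hx2
    have key : (x:ℤ) * n ≥ x + 2*n - 2 := by nlinarith [mul_nonneg (by omega : (0:ℤ) ≤ (x:ℤ) - 2) (by omega : (0:ℤ) ≤ (n:ℤ) - 1)]
    have hcr' : (cr:ℤ) + t = (x:ℤ) * n := by exact_mod_cast hcr
    have : (n:ℤ) ≤ (cr:ℤ) := by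
      have ht' : (t:ℤ) ≤ x := by exact_mod_cast ht
      have : (5:ℤ) ≤ n := by exact_mod_cast h5
      linarith
    exact_mod_cast this

lemma arith_main (n a b c d t1 t2 cr : ℕ) (h5 : 5 ≤ n)
    (hac : a + c = n) (hbd : b + d = n)
    (ht1a : t1 ≤ a) (ht1d : t1 ≤ d) (ht2b : t2 ≤ b) (ht2c : t2 ≤ c)
    (hcr : cr + t1 + t2 = a * d + b * c) :
    (1 ≤ a + b → 1 ≤ c + d → n ≤ cr + 1) ∧
    (2 ≤ a + b → 2 ≤ c + d → n ≤ cr) := by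
  have key : 1 ≤ a → 1 ≤ b → 1 ≤ c → 1 ≤ d → n ≤ cr := by
    intro ha hb hc hd
    have h := arith_int n a b c d t1 t2 (by exact_mod_cast h5)
      (by exact_mod_cast ha) (by exact_mod_cast hb) (by exact_mod_cast hc)
      (by exact_mod_cast hd) (by exact_mod_cast hac) (by exact_mod_cast hbd)
      (by exact_mod_cast ht1a) (by exact_mod_cast ht1d) (by exact_mod_cast ht2b)
      (by exact_mod_cast ht2c)
    have h2 : (cr:ℤ) + t1 + t2 = (a:ℤ) * d + (b:ℤ) * c := by exact_mod_cast hcr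
    have : (n:ℤ) ≤ cr := by linarith
    exact_mod_cast this
  have zc : ∀ x t cr' : ℕ, x ≤ n → t ≤ x → cr' + t = x * n →
      (1 ≤ x → n ≤ cr' + 1) ∧ (2 ≤ x → n ≤ cr') := fun x t cr' h1 h2 h3 =>
    zcase n x t cr' h5 h1 h2 h3
  rcases Nat.eq_zero_or_pos a with ha | ha
  · have hc : c = n := by omega
    have ht1 : t1 = 0 := by omega
    subst ha; subst hc; subst ht1
    have h := zc b t2 cr (by omega) ht2b (by linarith [hcr])
    exact ⟨fun h1 _ => h.1 (by omega), fun h1 _ => h.2 (by omega)⟩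
  rcases Nat.eq_zero_or_pos b with hb | hb
  · have hd : d = n := by omega
    have ht2 : t2 = 0 := by omega
    subst hb; subst hd; subst ht2
    have h := zc a t1 cr (by omega) ht1a (by linarith [hcr])
    exact ⟨fun h1 _ => h.1 (by omega), fun h1 _ => h.2 (by omega)⟩
  rcases Nat.eq_zero_or_pos c with hc | hc
  · have ha' : a = n := by omega
    have ht2 : t2 = 0 := by omega
    subst hc; subst ht2
    have h := zc d t1 cr (by omega) ht1d (by rw [ha'] at hcr; linarith [hcr])
    exact ⟨fun _ h2 => h.1 (by omega), fun _ h2 => h.2 (by omega)⟩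
  rcases Nat.eq_zero_or_pos d with hd | hd
  · have hb' : b = n := by omega
    have ht1 : t1 = 0 := by omega
    subst hd; subst ht1
    have h := zc c t2 cr (by omega) ht2c (by rw [hb'] at hcr; linarith [hcr])
    exact ⟨fun _ h2 => h.1 (by omega), fun _ h2 => h.2 (by omega)⟩
  exact ⟨fun _ _ => by have := key ha hb hc hd; omega, fun _ _ => key ha hb hc hd⟩

lemma K2Kn_adj {n : ℕ} {u v : Fin 2 × Fin n} :
    (K2timesKn n).Adj u v ↔ u.1 ≠ v.1 ∧ u.2 ≠ v.2 := Iff.rfl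

instance {n : ℕ} : DecidableRel (K2timesKn n).Adj :=
  fun u v => decidable_of_iff _ K2Kn_adj.symm

lemma reach_eq {α : Type*} {H : SimpleGraph α} {v : α}
    (h : ∀ w, ¬ H.Adj v w) {u : α} (hr : H.Reachable v u) : v = u := by
  obtain ⟨p⟩ := hr
  cases p with
  | nil => rfl
  | cons h' _ => exact absurd h' (h _)

lemma inc_cut (n : ℕ) (hn : 5 ≤ n) (v : Fin 2 × Fin n) :
    IsEdgeCut (K2timesKn n) ((K2timesKn n).incidenceSet v) := by
  constructor
  · exact (K2timesKn n).incidenceSet_subset v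
  · intro hconn
    set H := (K2timesKn n).deleteEdges ((K2timesKn n).incidenceSet v)
    have hiso : ∀ w, ¬ H.Adj v w := by
      intro w hw
      rw [deleteEdges_adj] at hw
      exact hw.2 ((K2timesKn n).mem_incidenceSet v w |>.2 hw.1)
    have h0 : 0 < n := by omega
    have h1 : 1 < n := by omega
    set u2 : Fin n := if v.2.val = 0 then ⟨1, h1⟩ else ⟨0, h0⟩ with hu2
    have hne : (v.1, u2) ≠ v := by
      intro h
      have h2 := congrArg (fun p => (Prod.snd p).val) h
      simp only [hu2] at h2
      by_cases hv : v.2.val = 0 <;> simp [hv] at h2 <;> omega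
    exact hne (reach_eq hiso (hconn.preconnected v (v.1, u2))).symm

lemma fin2_cases : ∀ i : Fin 2, i = 0 ∨ i = 1 := by decide

lemma fin2_ne0 : ∀ i : Fin 2, i ≠ 0 → i = 1 := by decide

lemma side_card {n : ℕ} (T : Finset (Fin 2 × Fin n)) :
    T.card = (Finset.univ.filter (fun j => ((0:Fin 2), j) ∈ T)).card
           + (Finset.univ.filter (fun j => ((1:Fin 2), j) ∈ T)).card := by
  have key : ∀ i : Fin 2, (T.filter (fun p => p.1 = i)).card
      = (Finset.univ.filter (fun j => (i, j) ∈ T)).card := by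
    intro i
    apply Finset.card_nbij' (fun p => p.2) (fun j => (i, j))
    · intro p hp
      simp only [Finset.mem_coe, Finset.mem_filter, Finset.mem_univ, true_and] at hp ⊢
      rw [show (i, p.2) = p from by rw [← hp.2]]
      exact hp.1
    · intro j hj
      simp only [Finset.mem_coe, Finset.mem_filter, Finset.mem_univ, true_and] at hj
      simp [hj]
    · intro p hp
      simp only [Finset.mem_coe, Finset.mem_filter] at hp
      rw [← hp.2]
    · intro j _
      rfl
  rw [Finset.card_eq_sum_card_fiberwise (f := fun p => p.1) (t := Finset.univ)
    (fun x _ => Finset.mem_univ _), Fin.sum_univ_two, key 0, key 1]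

lemma cross_count {n : ℕ} (hn : 5 ≤ n) (A : Finset (Fin 2 × Fin n)) :
    (A.Nonempty → Aᶜ.Nonempty →
      n ≤ ((A ×ˢ Aᶜ).filter (fun p => (K2timesKn n).Adj p.1 p.2)).card + 1) ∧
    (2 ≤ A.card → 2 ≤ Aᶜ.card →
      n ≤ ((A ×ˢ Aᶜ).filter (fun p => (K2timesKn n).Adj p.1 p.2)).card) := by
  classical
  set S := (A ×ˢ Aᶜ).filter (fun p => (K2timesKn n).Adj p.1 p.2) with hS
  set A0 := Finset.univ.filter (fun j => ((0:Fin 2), j) ∈ A) with hA0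
  set A1 := Finset.univ.filter (fun j => ((1:Fin 2), j) ∈ A) with hA1
  set B0 := Finset.univ.filter (fun j => ¬ ((0:Fin 2), j) ∈ A) with hB0
  set B1 := Finset.univ.filter (fun j => ¬ ((1:Fin 2), j) ∈ A) with hB1
  set P01 := (A0 ×ˢ B1).filter (fun q => q.1 ≠ q.2) with hP01
  set P10 := (A1 ×ˢ B0).filter (fun q => q.1 ≠ q.2) with hP10
  -- cardinalities of sides
  have hac : A0.card + B0.card = n := by
    rw [hA0, hB0, Finset.card_filter_add_card_filter_not]
    simp
  have hbd : A1.card + B1.card = n := by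
    rw [hA1, hB1, Finset.card_filter_add_card_filter_not]
    simp
  -- |A| and |Aᶜ|
  have hcardA : A.card = A0.card + A1.card := side_card A
  have hcardAc : Aᶜ.card = B0.card + B1.card := by
    rw [side_card Aᶜ]
    congr 2 <;> · apply Finset.filter_congr; intro j _; simp [Finset.mem_compl]
  -- S splits
  have hfiber : ∀ i : Fin 2, ∀ T : Finset (Fin n × Fin n),
      (∀ p : (Fin 2 × Fin n) × (Fin 2 × Fin n), p ∈ S → p.1.1 = i →
        (p.1.2, p.2.2) ∈ T) →
      (∀ q : Fin n × Fin n, q ∈ T → ((i, q.1), (1 - i, q.2)) ∈ S) →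
      True := fun _ _ _ _ => trivial
  have hS0 : (S.filter (fun p => p.1.1 = 0)).card = P01.card := by
    apply Finset.card_nbij' (fun p => (p.1.2, p.2.2))
      (fun q => (((0:Fin 2), q.1), ((1:Fin 2), q.2)))
    · intro p hp
      simp only [Finset.mem_coe, hS, Finset.mem_filter, Finset.mem_product, Finset.mem_compl] at hp
      obtain ⟨⟨⟨hpA, hpAc⟩, hadj⟩, h0⟩ := hp
      rw [K2Kn_adj] at hadj
      have h21 : p.2.1 = 1 := fin2_ne0 _ (by rw [← h0]; exact fun h => hadj.1 h.symm)
      simp only [Finset.mem_coe, hP01, Finset.mem_filter, Finset.mem_product, hA0, hB1,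
        Finset.mem_univ, true_and]
      refine ⟨⟨?_, ?_⟩, hadj.2⟩
      · rwa [show ((0:Fin 2), p.1.2) = p.1 from by rw [← h0]]
      · rwa [show ((1:Fin 2), p.2.2) = p.2 from by rw [← h21]]
    · intro q hq
      simp only [Finset.mem_coe, hP01, Finset.mem_filter, Finset.mem_product, hA0, hB1,
        Finset.mem_univ, true_and] at hq
      obtain ⟨⟨h1, h2⟩, hne⟩ := hq
      simp only [Finset.mem_coe, hS, Finset.mem_filter, Finset.mem_product, Finset.mem_compl]
      exact ⟨⟨⟨h1, h2⟩, K2Kn_adj.2 ⟨by simp, hne⟩⟩, by simp⟩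
    · intro p hp
      simp only [Finset.mem_coe, hS, Finset.mem_filter] at hp
      obtain ⟨⟨_, hadj⟩, h0⟩ := hp
      rw [K2Kn_adj] at hadj
      have h21 : p.2.1 = 1 := fin2_ne0 _ (by rw [← h0]; exact fun h => hadj.1 h.symm)
      ext <;> simp [h0, h21]
    · intro q _
      rfl
  have hS1 : (S.filter (fun p => ¬ p.1.1 = 0)).card = P10.card := by
    apply Finset.card_nbij' (fun p => (p.1.2, p.2.2))
      (fun q => (((1:Fin 2), q.1), ((0:Fin 2), q.2)))
    · intro p hp
      simp only [Finset.mem_coe, hS, Finset.mem_filter, Finset.mem_product, Finset.mem_compl] at hp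
      obtain ⟨⟨⟨hpA, hpAc⟩, hadj⟩, h0⟩ := hp
      rw [K2Kn_adj] at hadj
      have h11 : p.1.1 = 1 := fin2_ne0 _ h0
      have h21 : p.2.1 = 0 := by
        rcases fin2_cases p.2.1 with h | h
        · exact h
        · exact absurd (by rw [h11, h]) hadj.1
      simp only [Finset.mem_coe, hP10, Finset.mem_filter, Finset.mem_product, hA1, hB0,
        Finset.mem_univ, true_and]
      refine ⟨⟨?_, ?_⟩, hadj.2⟩
      · rwa [show ((1:Fin 2), p.1.2) = p.1 from by rw [← h11]]
      · rwa [show ((0:Fin 2), p.2.2) = p.2 from by rw [← h21]]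
    · intro q hq
      simp only [Finset.mem_coe, hP10, Finset.mem_filter, Finset.mem_product, hA1, hB0,
        Finset.mem_univ, true_and] at hq
      obtain ⟨⟨h1, h2⟩, hne⟩ := hq
      simp only [Finset.mem_coe, hS, Finset.mem_filter, Finset.mem_product, Finset.mem_compl]
      exact ⟨⟨⟨h1, h2⟩, K2Kn_adj.2 ⟨by simp, hne⟩⟩, by simp⟩
    · intro p hp
      simp only [Finset.mem_coe, hS, Finset.mem_filter] at hp
      obtain ⟨⟨_, hadj⟩, h0⟩ := hp
      rw [K2Kn_adj] at hadj
      have h11 : p.1.1 = 1 := fin2_ne0 _ h0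
      have h21 : p.2.1 = 0 := by
        rcases fin2_cases p.2.1 with h | h
        · exact h
        · exact absurd (by rw [h11, h]) hadj.1
      ext <;> simp [h11, h21]
    · intro q _
      rfl
  have hSsplit : S.card = P01.card + P10.card := by
    rw [← hS0, ← hS1, Finset.card_filter_add_card_filter_not]
  -- diagonal counts
  have hdiag : ∀ X Y : Finset (Fin n),
      (((X ×ˢ Y).filter (fun q => ¬ q.1 ≠ q.2)).card) = (X ∩ Y).card := by
    intro X Y
    apply Finset.card_nbij' (fun q => q.1) (fun j => (j, j))
    · intro q hq
      simp only [Finset.mem_coe, Finset.mem_filter, Finset.mem_product, not_not] at hq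
      simp only [Finset.mem_coe, Finset.mem_inter]
      exact ⟨hq.1.1, hq.2 ▸ hq.1.2⟩
    · intro j hj
      simp only [Finset.mem_coe, Finset.mem_inter] at hj
      simp [hj.1, hj.2]
    · intro q hq
      simp only [Finset.mem_coe, Finset.mem_filter, not_not] at hq
      ext <;> simp [hq.2]
    · intro j _
      rfl
  have h01 : P01.card + (A0 ∩ B1).card = A0.card * B1.card := by
    rw [hP01, ← hdiag A0 B1, Finset.card_filter_add_card_filter_not,
      Finset.card_product]
  have h10 : P10.card + (A1 ∩ B0).card = A1.card * B0.card := by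
    rw [hP10, ← hdiag A1 B0, Finset.card_filter_add_card_filter_not,
      Finset.card_product]
  have harith := arith_main n A0.card A1.card B0.card B1.card
      (A0 ∩ B1).card (A1 ∩ B0).card S.card hn hac hbd
      (Finset.card_le_card Finset.inter_subset_left)
      (Finset.card_le_card Finset.inter_subset_right)
      (Finset.card_le_card Finset.inter_subset_left)
      (Finset.card_le_card Finset.inter_subset_right)
      (by omega)
  constructor
  · intro h1 h2
    have := Finset.card_pos.2 h1
    have := Finset.card_pos.2 h2
    exact harith.1 (by omega) (by omega)
  · intro h1 h2
    exact harith.2 (by omega) (by omega)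

lemma cut_structure {n : ℕ} (hn : 5 ≤ n) (F : Finset (Sym2 (Fin 2 × Fin n)))
    (hF : IsEdgeCut (K2timesKn n) ↑F) :
    ∃ A : Finset (Fin 2 × Fin n), A.Nonempty ∧ Aᶜ.Nonempty ∧
      (∀ x ∈ A, ∀ y ∈ Aᶜ, (K2timesKn n).Adj x y → s(x, y) ∈ F) ∧
      ((A ×ˢ Aᶜ).filter (fun p => (K2timesKn n).Adj p.1 p.2)).card ≤ F.card := by
  classical
  obtain ⟨hFE, hdis⟩ := hF
  set H := (K2timesKn n).deleteEdges ↑F with hH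
  have hne : Nonempty (Fin 2 × Fin n) := ⟨(0, ⟨0, by omega⟩)⟩
  have hpre : ¬ H.Preconnected := fun hp => hdis ⟨hp⟩
  rw [SimpleGraph.Preconnected] at hpre
  push_neg at hpre
  obtain ⟨u, w, hnr⟩ := hpre
  set A := Finset.univ.filter (fun x => H.Reachable u x) with hA
  have huA : u ∈ A := Finset.mem_filter.2 ⟨Finset.mem_univ _, SimpleGraph.Reachable.refl u⟩
  have hwA : w ∈ Aᶜ := by simp [hA, hnr]
  have hcross : ∀ x ∈ A, ∀ y ∈ Aᶜ, (K2timesKn n).Adj x y → s(x, y) ∈ F := by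
    intro x hx y hy hadj
    by_contra hmem
    have : H.Adj x y := by
      rw [hH, SimpleGraph.deleteEdges_adj]
      exact ⟨hadj, hmem⟩
    have hx' : H.Reachable u x := by simpa [hA] using hx
    have : H.Reachable u y := hx'.trans this.reachable
    simp [hA, this] at hy
  refine ⟨A, ⟨u, huA⟩, ⟨w, hwA⟩, hcross, ?_⟩
  apply Finset.card_le_card_of_injOn (fun p => s(p.1, p.2))
  · intro p hp
    simp only [Finset.mem_coe, Finset.mem_filter, Finset.mem_product] at hp
    exact hcross p.1 hp.1.1 p.2 hp.1.2 hp.2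
  · intro p hp q hq heq
    simp only [Finset.mem_coe, Finset.mem_filter, Finset.mem_product,
      Finset.mem_compl] at hp hq
    rw [Sym2.eq_iff] at heq
    rcases heq with ⟨h1, h2⟩ | ⟨h1, h2⟩
    · exact Prod.ext h1 h2
    · exact absurd (h1 ▸ hp.1.1) (by simpa using hq.1.2)

lemma degree_K2Kn {n : ℕ} (v : Fin 2 × Fin n) : (K2timesKn n).degree v = n - 1 := by
  rw [SimpleGraph.degree, show (K2timesKn n).neighborFinset v =
    ({v.1}ᶜ : Finset (Fin 2)) ×ˢ ({v.2}ᶜ : Finset (Fin n)) from by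
      ext w; simp [K2Kn_adj, ne_comm, and_comm]]
  simp [Finset.card_compl]

lemma coe_incFinset {n : ℕ} (v : Fin 2 × Fin n) :
    ((K2timesKn n).incidenceFinset v : Set (Sym2 (Fin 2 × Fin n)))
      = (K2timesKn n).incidenceSet v := by
  ext e
  simp [SimpleGraph.mem_incidenceFinset]

lemma edgeConn_K2Kn {n : ℕ} (hn : 5 ≤ n) : edgeConn (K2timesKn n) = n - 1 := by
  classical
  have hv : (((0 : Fin 2), (⟨0, by omega⟩ : Fin n)) : Fin 2 × Fin n)
      = ((0 : Fin 2), (⟨0, by omega⟩ : Fin n)) := rfl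
  set v : Fin 2 × Fin n := ((0 : Fin 2), (⟨0, by omega⟩ : Fin n)) with hvdef
  have hmem : (n - 1) ∈ {k | ∃ F : Finset (Sym2 (Fin 2 × Fin n)),
      IsEdgeCut (K2timesKn n) ↑F ∧ F.card = k} := by
    refine ⟨(K2timesKn n).incidenceFinset v, ?_, ?_⟩
    · rw [coe_incFinset]
      exact inc_cut n hn v
    · rw [SimpleGraph.card_incidenceFinset_eq_degree, degree_K2Kn]
  apply le_antisymm
  · exact Nat.sInf_le hmem
  · apply le_csInf ⟨n - 1, hmem⟩
    rintro k ⟨F, hcut, rfl⟩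
    obtain ⟨A, hA1, hA2, _, hle⟩ := cut_structure hn F hcut
    have := (cross_count hn A).1 hA1 hA2
    omega

theorem stmt1 (n : ℕ) (hn : 5 ≤ n) : SuperEdgeConnected (K2timesKn n) := by
  classical
  intro F hcut hcard
  rw [edgeConn_K2Kn hn] at hcard
  obtain ⟨A, hA1, hA2, hcross, hle⟩ := cut_structure hn F hcut
  have hcc := cross_count hn A
  by_cases h2 : 2 ≤ A.card ∧ 2 ≤ Aᶜ.card
  · exfalso
    have := hcc.2 h2.1 h2.2
    omega
  · have hp1 := Finset.card_pos.2 hA1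
    have hp2 := Finset.card_pos.2 hA2
    have h1 : A.card = 1 ∨ Aᶜ.card = 1 := by omega
    have key : ∃ v : Fin 2 × Fin n, (K2timesKn n).incidenceSet v ⊆ ↑F := by
      rcases h1 with h | h
      · obtain ⟨v, hv⟩ := Finset.card_eq_one.1 h
        refine ⟨v, ?_⟩
        rintro e ⟨heE, hve⟩
        induction e using Sym2.inductionOn with
        | hf x y =>
          rw [Sym2.mem_iff] at hve
          have hadj : (K2timesKn n).Adj x y := (SimpleGraph.mem_edgeSet _).1 heE
          rcases hve with rfl | rfl
          · have hyA : y ∈ Aᶜ := by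
              rw [Finset.mem_compl, hv, Finset.mem_singleton]
              exact fun hh => (K2timesKn n).ne_of_adj hadj hh.symm
            exact hcross v (by simp [hv]) y hyA hadj
          · have hxA : x ∈ Aᶜ := by
              rw [Finset.mem_compl, hv, Finset.mem_singleton]
              exact fun hh => (K2timesKn n).ne_of_adj hadj hh
            have := hcross v (by simp [hv]) x hxA hadj.symm
            rw [Sym2.eq_swap] at this
            exact Finset.mem_coe.2 this
      · obtain ⟨v, hv⟩ := Finset.card_eq_one.1 h
        refine ⟨v, ?_⟩
        rintro e ⟨heE, hve⟩
        induction e using Sym2.inductionOn with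
        | hf x y =>
          rw [Sym2.mem_iff] at hve
          have hadj : (K2timesKn n).Adj x y := (SimpleGraph.mem_edgeSet _).1 heE
          have hvAc : v ∈ Aᶜ := by simp [hv]
          rcases hve with rfl | rfl
          · have hyA : y ∈ A := by
              by_contra hh
              rw [← Finset.mem_compl, hv, Finset.mem_singleton] at hh
              exact (K2timesKn n).ne_of_adj hadj hh.symm
            have := hcross y hyA v hvAc hadj.symm
            rw [Sym2.eq_swap] at this
            exact Finset.mem_coe.2 this
          · have hxA : x ∈ A := by
              by_contra hh
              rw [← Finset.mem_compl, hv, Finset.mem_singleton] at hh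
              exact (K2timesKn n).ne_of_adj hadj hh
            exact hcross x hxA v hvAc hadj
    obtain ⟨v, hsub⟩ := key
    refine ⟨v, ?_⟩
    have hsubF : (K2timesKn n).incidenceFinset v ⊆ F := by
      intro e he
      rw [SimpleGraph.mem_incidenceFinset] at he
      exact hsub he
    have hcardinc : ((K2timesKn n).incidenceFinset v).card = n - 1 := by
      rw [SimpleGraph.card_incidenceFinset_eq_degree, degree_K2Kn]
    have := Finset.eq_of_subset_of_card_le hsubF (by omega)
    rw [← this, coe_incFinset]
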